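/- If D is an integral domain such that D[[X]] is a v-domain, then D is a v-domain. -/

import Mathlib

open scoped nonZeroDivisors
set_option linter.unusedSectionVars false
set_option maxHeartbeats 4000000
set_option synthInstance.maxHeartbeats 1000000

section Aux
variable {R : Type*} [CommRing R] [IsDomain R] {K : Type*} [Field K] [Algebra R K]
  [IsFractionRing R K]

theorem VAux.exists_ne_zero {I : FractionalIdeal R⁰ K} (hI : I ≠ 0) : ∃ x ∈ I, x ≠ 0 := by
  have : (I : Submodule R K) ≠ ⊥ := by
    simpa [← FractionalIdeal.coeToSubmodule_eq_bot] using hI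
  obtain ⟨x, hx, hx0⟩ := Submodule.exists_mem_ne_zero_of_ne_bot this
  exact ⟨x, FractionalIdeal.mem_coe.mp hx, hx0⟩

theorem VAux.inv_ne_zero {I : FractionalIdeal R⁰ K} (hI : I ≠ 0) : I⁻¹ ≠ 0 := by
  obtain ⟨a, haS, haI⟩ := I.isFractional
  have hmem : algebraMap R K a ∈ I⁻¹ := by
    rw [FractionalIdeal.mem_inv_iff hI]
    intro y hy
    obtain ⟨d, hd⟩ := haI y (FractionalIdeal.mem_coe.mpr hy)
    exact (FractionalIdeal.mem_one_iff _).mpr ⟨d, by rwa [Algebra.smul_def] at hd⟩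
  intro h0
  have := h0 ▸ hmem
  rw [FractionalIdeal.mem_zero_iff] at this
  exact IsFractionRing.to_map_ne_zero_of_mem_nonZeroDivisors haS this

theorem VAux.mul_inv_ne_zero {I : FractionalIdeal R⁰ K} (hI : I ≠ 0) : I * I⁻¹ ≠ 0 := by
  obtain ⟨x, hx, hx0⟩ := VAux.exists_ne_zero hI
  obtain ⟨z, hz, hz0⟩ := VAux.exists_ne_zero (VAux.inv_ne_zero hI)
  intro h0
  have := h0 ▸ FractionalIdeal.mul_mem_mul hx hz
  rw [FractionalIdeal.mem_zero_iff] at this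
  exact mul_ne_zero hx0 hz0 this

theorem VAux.one_inv : (1 : FractionalIdeal R⁰ K)⁻¹ = 1 := by
  rw [FractionalIdeal.inv_eq, FractionalIdeal.div_one]

theorem VAux.le_inv_inv {I : FractionalIdeal R⁰ K} (hI : I ≠ 0) : I ≤ (I⁻¹)⁻¹ := by
  intro x hx
  refine (FractionalIdeal.mem_inv_iff (VAux.inv_ne_zero hI)).mpr fun z hz => ?_
  rw [FractionalIdeal.mem_inv_iff hI] at hz
  rw [mul_comm]
  exact hz x hx

end Aux

/-- `R` is a `v`-domain: every nonzero finitely generated fractional ideal `I`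
satisfies `(I * I⁻¹)_v = R`, where `J_v = (J⁻¹)⁻¹`. -/
def IsVDomain (R : Type*) [CommRing R] [IsDomain R] : Prop :=
  ∀ I : FractionalIdeal R⁰ (FractionRing R), I ≠ 0 → (I : Submodule R (FractionRing R)).FG →
    ((I * I⁻¹)⁻¹)⁻¹ = 1

/-- If `D[[X]]` is a `v`-domain, then `D` is a `v`-domain. -/
theorem stmt_1 (D : Type*) [CommRing D] [IsDomain D]
    (h : IsVDomain (PowerSeries D)) : IsVDomain D := by
  intro I hI0 hIfg
  obtain ⟨s, hs⟩ := hIfg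
  set σ : D →+* FractionRing D := algebraMap D (FractionRing D) with hσdef
  set τ : PowerSeries D →+* FractionRing (PowerSeries D) :=
    algebraMap (PowerSeries D) (FractionRing (PowerSeries D)) with hτdef
  have hσinj : Function.Injective σ := IsFractionRing.injective D (FractionRing D)
  have hτinj : Function.Injective τ :=
    IsFractionRing.injective (PowerSeries D) (FractionRing (PowerSeries D))
  have hginj : Function.Injective (τ.comp (PowerSeries.C (R := D))) :=
    hτinj.comp PowerSeries.C_injective
  set j : FractionRing D →+* FractionRing (PowerSeries D) := IsFractionRing.lift hginj
    with hjdef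
  have hjinj : Function.Injective j := j.injective
  have hj : ∀ t : D, j (σ t) = τ (PowerSeries.C (R := D) t) := fun t =>
    IsFractionRing.lift_algebraMap hginj t
  -- The extended fractional ideal
  set A : FractionalIdeal (PowerSeries D)⁰ (FractionRing (PowerSeries D)) :=
    FractionalIdeal.spanFinset (PowerSeries D) s (fun x => j x) with hAdef
  have hAcoe : (A : Submodule (PowerSeries D) (FractionRing (PowerSeries D)))
      = Submodule.span (PowerSeries D) (j '' ↑s) :=
    FractionalIdeal.spanFinset_coe _ _ _
  have hjsA : ∀ x ∈ s, j x ∈ A := by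
    intro x hx
    rw [← FractionalIdeal.mem_coe, hAcoe]
    exact Submodule.subset_span ⟨x, hx, rfl⟩
  have hA0 : A ≠ 0 := by
    rw [hAdef, Ne, FractionalIdeal.spanFinset_eq_zero]
    intro hall
    apply hI0
    have : (I : Submodule D (FractionRing D)) = ⊥ := by
      rw [← hs, Submodule.span_eq_bot]
      intro x hx
      exact hjinj (by rw [hall x hx, map_zero])
    rwa [← FractionalIdeal.coeToSubmodule_eq_bot]
  have hAfg : (A : Submodule (PowerSeries D) (FractionRing (PowerSeries D))).FG := by
    rw [hAcoe]
    exact Submodule.fg_span ((s.finite_toSet.image _))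
  have hAv : ((A * A⁻¹)⁻¹)⁻¹ = 1 := h A hA0 hAfg
  have hAA0 : A * A⁻¹ ≠ 0 := VAux.mul_inv_ne_zero hA0
  have hII0 : I * I⁻¹ ≠ 0 := VAux.mul_inv_ne_zero hI0
  -- main step
  have hmain : (I * I⁻¹)⁻¹ = 1 := by
    apply le_antisymm
    · intro y hy
      have hy' : ∀ z ∈ I * I⁻¹, y * z ∈ (1 : FractionalIdeal D⁰ (FractionRing D)) :=
        (FractionalIdeal.mem_inv_iff hII0).mp hy
      -- Core: for `v ∈ A⁻¹` and a generator `x₀ ∈ s`, `j y * (j x₀ * v)` is integral.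
      have hcore : ∀ v ∈ A⁻¹, ∀ x₀, ∀ hx₀ : x₀ ∈ s, j y * (j x₀ * v) ∈
          (1 : FractionalIdeal (PowerSeries D)⁰ (FractionRing (PowerSeries D))) := by
        intro v hv x₀ hx₀
        have hvx : ∀ x ∈ s, ∃ g : PowerSeries D, τ g = v * j x := by
          intro x hx
          have h1 := (FractionalIdeal.mem_inv_iff hA0).mp hv (j x) (hjsA x hx)
          obtain ⟨g, hg⟩ := (FractionalIdeal.mem_one_iff _).mp h1
          exact ⟨g, hg⟩
        choose G hG using hvx
        by_cases hx00 : x₀ = (0 : FractionRing D)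
        · rw [hx00, map_zero, zero_mul, mul_zero]
          exact (FractionalIdeal.mem_one_iff _).mpr ⟨0, map_zero _⟩
        have hcoef : ∀ m : ℕ, ∃ d : D,
            σ d = y * σ (PowerSeries.coeff (R := D) m (G x₀ hx₀)) := by
          intro m
          have hcross : ∀ x, ∀ hx : x ∈ s,
              x₀ * σ (PowerSeries.coeff (R := D) m (G x hx))
                = x * σ (PowerSeries.coeff (R := D) m (G x₀ hx₀)) := by
            intro x hx
            obtain ⟨a, b, hb, hab⟩ := IsFractionRing.div_surjective (A := D) x
            obtain ⟨a₀, b₀, hb₀, hab₀⟩ := IsFractionRing.div_surjective (A := D) x₀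
            have hσb : σ b ≠ 0 := IsFractionRing.to_map_ne_zero_of_mem_nonZeroDivisors hb
            have hσb₀ : σ b₀ ≠ 0 := IsFractionRing.to_map_ne_zero_of_mem_nonZeroDivisors hb₀
            have hxa : x * σ b = σ a := by rw [← hab]; rw [hσdef] at hσb ⊢; field_simp
            have hxa₀ : x₀ * σ b₀ = σ a₀ := by rw [← hab₀]; rw [hσdef] at hσb₀ ⊢; field_simp
            have hL : τ (G x hx) * j x₀ = τ (G x₀ hx₀) * j x := by
              rw [hG, hG]; ring
            have hjb : j x * τ (PowerSeries.C (R := D) b) = τ (PowerSeries.C (R := D) a) := by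
              rw [← hj, ← hj, ← map_mul, hxa]
            have hjb₀ : j x₀ * τ (PowerSeries.C (R := D) b₀) = τ (PowerSeries.C (R := D) a₀) := by
              rw [← hj, ← hj, ← map_mul, hxa₀]
            have hfield : τ (G x hx) * (τ (PowerSeries.C (R := D) a₀) * τ (PowerSeries.C (R := D) b))
                = τ (G x₀ hx₀) * (τ (PowerSeries.C (R := D) a) * τ (PowerSeries.C (R := D) b₀)) := by
              linear_combination (τ (PowerSeries.C (R := D) b) * τ (PowerSeries.C (R := D) b₀)) * hL
                - τ (G x hx) * τ (PowerSeries.C (R := D) b) * hjb₀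
                + τ (G x₀ hx₀) * τ (PowerSeries.C (R := D) b₀) * hjb
            have hps : G x hx * PowerSeries.C (R := D) (a₀ * b)
                = G x₀ hx₀ * PowerSeries.C (R := D) (a * b₀) := by
              apply hτinj
              simp only [map_mul]
              exact hfield
            have hD : PowerSeries.coeff (R := D) m (G x hx) * (a₀ * b)
                = PowerSeries.coeff (R := D) m (G x₀ hx₀) * (a * b₀) := by
              have := congrArg (PowerSeries.coeff (R := D) m) hps
              rwa [PowerSeries.coeff_mul_C, PowerSeries.coeff_mul_C] at this
            have hK : σ (PowerSeries.coeff (R := D) m (G x hx)) * (σ a₀ * σ b)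
                = σ (PowerSeries.coeff (R := D) m (G x₀ hx₀)) * (σ a * σ b₀) := by
              simpa [map_mul] using congrArg σ hD
            rw [← hxa, ← hxa₀] at hK
            have hgoal : (x₀ * σ (PowerSeries.coeff (R := D) m (G x hx))) * (σ b₀ * σ b)
                = (x * σ (PowerSeries.coeff (R := D) m (G x₀ hx₀))) * (σ b₀ * σ b) := by
              linear_combination hK
            exact mul_right_cancel₀ (mul_ne_zero hσb₀ hσb) hgoal
          set fm : FractionRing D := x₀⁻¹ * σ (PowerSeries.coeff (R := D) m (G x₀ hx₀)) with hfmdef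
          have hfmx : ∀ x, ∀ hx : x ∈ s, fm * x = σ (PowerSeries.coeff (R := D) m (G x hx)) := by
            intro x hx
            have h2 : x₀ * (fm * x) = x₀ * σ (PowerSeries.coeff (R := D) m (G x hx)) := by
              calc x₀ * (fm * x)
                  = (x₀ * x₀⁻¹) * (σ (PowerSeries.coeff (R := D) m (G x₀ hx₀)) * x) := by
                    rw [hfmdef]; ring
                _ = σ (PowerSeries.coeff (R := D) m (G x₀ hx₀)) * x := by
                    rw [mul_inv_cancel₀ hx00, one_mul]
                _ = x₀ * σ (PowerSeries.coeff (R := D) m (G x hx)) := by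
                    rw [mul_comm]; exact (hcross x hx).symm
            exact mul_left_cancel₀ hx00 h2
          have hfmI : fm ∈ I⁻¹ := by
            refine (FractionalIdeal.mem_inv_iff hI0).mpr fun z hz => ?_
            have hle : (I : Submodule D (FractionRing D)) ≤ Submodule.comap
                (LinearMap.mulLeft D fm)
                ((1 : FractionalIdeal D⁰ (FractionRing D)) : Submodule D (FractionRing D)) := by
              rw [← hs]
              refine Submodule.span_le.mpr fun x hx => Submodule.mem_comap.mpr ?_
              rw [LinearMap.mulLeft_apply, hfmx x hx]
              exact FractionalIdeal.mem_coe.mpr (FractionalIdeal.coe_mem_one _ _)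
            have h3 := Submodule.mem_comap.mp (hle (FractionalIdeal.mem_coe.mpr hz))
            rw [LinearMap.mulLeft_apply] at h3
            exact FractionalIdeal.mem_coe.mp h3
          have hx₀I : x₀ ∈ I := by
            have h4 : x₀ ∈ Submodule.span D (↑s : Set (FractionRing D)) :=
              Submodule.subset_span hx₀
            rw [hs] at h4
            exact FractionalIdeal.mem_coe.mp h4
          have hprod := hy' (x₀ * fm) (FractionalIdeal.mul_mem_mul hx₀I hfmI)
          have hxfm : x₀ * fm = σ (PowerSeries.coeff (R := D) m (G x₀ hx₀)) := by
            rw [hfmdef]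
            field_simp
          rw [hxfm] at hprod
          exact (FractionalIdeal.mem_one_iff _).mp hprod
        choose d hd using hcoef
        obtain ⟨c, e, he, hce⟩ := IsFractionRing.div_surjective (A := D) y
        have hσe : σ e ≠ 0 := IsFractionRing.to_map_ne_zero_of_mem_nonZeroDivisors he
        have hey : σ e * y = σ c := by rw [← hce]; rw [hσdef] at hσe ⊢; field_simp
        have hCe : PowerSeries.C (R := D) e * PowerSeries.mk d
            = PowerSeries.C (R := D) c * G x₀ hx₀ := by
          ext m
          rw [PowerSeries.coeff_C_mul, PowerSeries.coeff_C_mul, PowerSeries.coeff_mk]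
          apply hσinj
          rw [map_mul, map_mul, hd m]
          linear_combination σ (PowerSeries.coeff (R := D) m (G x₀ hx₀)) * hey
        have hτCe : τ (PowerSeries.C (R := D) e) ≠ 0 := by
          intro h0
          have h5 : PowerSeries.C (R := D) e = 0 := hτinj (by rw [h0, map_zero])
          have h6 : e = 0 := PowerSeries.C_injective (by rw [h5, map_zero])
          exact hσe (by rw [h6, map_zero])
        have hτg' : τ (PowerSeries.mk d) = j y * τ (G x₀ hx₀) := by
          apply mul_left_cancel₀ hτCe
          rw [← map_mul, hCe, map_mul, ← hj c, ← hey, map_mul, hj e]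
          ring
        have h7 : j y * (j x₀ * v) = τ (PowerSeries.mk d) := by
          rw [hτg', hG x₀ hx₀]
          ring
        rw [h7]
        exact FractionalIdeal.coe_mem_one _ _
      -- Step: j y ∈ (A * A⁻¹)⁻¹
      have hjyB : j y ∈ (A * A⁻¹)⁻¹ := by
        refine (FractionalIdeal.mem_inv_iff hAA0).mpr fun w hw => ?_
        have hsub : (A : Submodule (PowerSeries D) (FractionRing (PowerSeries D)))
            * (A⁻¹ : FractionalIdeal (PowerSeries D)⁰ (FractionRing (PowerSeries D)))
            ≤ Submodule.comap (LinearMap.mulLeft (PowerSeries D) (j y))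
              ((1 : FractionalIdeal (PowerSeries D)⁰ (FractionRing (PowerSeries D))) :
                Submodule (PowerSeries D) (FractionRing (PowerSeries D))) := by
          refine Submodule.mul_le.mpr fun u hu v hv => ?_
          have hv' : v ∈ A⁻¹ := FractionalIdeal.mem_coe.mp hv
          have hu' : u ∈ Submodule.span (PowerSeries D) (j '' ↑s) := hAcoe ▸ hu
          have hinner : Submodule.span (PowerSeries D) (j '' ↑s)
              ≤ Submodule.comap (LinearMap.mulLeft (PowerSeries D) (j y * v))
                ((1 : FractionalIdeal (PowerSeries D)⁰ (FractionRing (PowerSeries D))) :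
                  Submodule (PowerSeries D) (FractionRing (PowerSeries D))) := by
            refine Submodule.span_le.mpr ?_
            rintro _ ⟨x, hx, rfl⟩
            refine Submodule.mem_comap.mpr ?_
            rw [LinearMap.mulLeft_apply]
            have h8 := hcore v hv' x hx
            have h9 : j y * v * j x = j y * (j x * v) := by ring
            rw [h9]
            exact FractionalIdeal.mem_coe.mpr h8
          have h10 := Submodule.mem_comap.mp (hinner hu')
          rw [LinearMap.mulLeft_apply] at h10
          refine Submodule.mem_comap.mpr ?_
          rw [LinearMap.mulLeft_apply]
          have h11 : j y * (u * v) = j y * v * u := by ring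
          rw [h11]
          exact h10
        have hw' : w ∈ (A : Submodule (PowerSeries D) (FractionRing (PowerSeries D)))
            * (A⁻¹ : FractionalIdeal (PowerSeries D)⁰ (FractionRing (PowerSeries D))) := by
          rw [← FractionalIdeal.coe_mul]
          exact FractionalIdeal.mem_coe.mpr hw
        have h12 := Submodule.mem_comap.mp (hsub hw')
        rw [LinearMap.mulLeft_apply] at h12
        exact FractionalIdeal.mem_coe.mp h12
      have hB1 : (A * A⁻¹)⁻¹ ≤ 1 := by
        have hB0 : (A * A⁻¹)⁻¹ ≠ 0 := VAux.inv_ne_zero hAA0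
        calc (A * A⁻¹)⁻¹ ≤ (((A * A⁻¹)⁻¹)⁻¹)⁻¹ := VAux.le_inv_inv hB0
        _ = 1 := by rw [hAv, VAux.one_inv]
      obtain ⟨gY, hgY⟩ := (FractionalIdeal.mem_one_iff _).mp (hB1 hjyB)
      obtain ⟨c, e, he, hce⟩ := IsFractionRing.div_surjective (A := D) y
      have hσe : σ e ≠ 0 := IsFractionRing.to_map_ne_zero_of_mem_nonZeroDivisors he
      have hey : σ e * y = σ c := by rw [← hce]; rw [hσdef] at hσe ⊢; field_simp
      have hCegY : PowerSeries.C (R := D) e * gY = PowerSeries.C (R := D) c := by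
        apply hτinj
        rw [map_mul, hgY, ← hj, ← hj, ← map_mul, hey]
      have hc0 : e * PowerSeries.coeff (R := D) 0 gY = c := by
        have := congrArg (PowerSeries.coeff (R := D) 0) hCegY
        rwa [PowerSeries.coeff_C_mul, PowerSeries.coeff_zero_C] at this
      have hyD : y = σ (PowerSeries.coeff (R := D) 0 gY) := by
        apply mul_left_cancel₀ hσe
        rw [hey, ← hc0, map_mul]
      exact (FractionalIdeal.mem_one_iff _).mpr ⟨_, hyD.symm⟩
    · intro y hy
      obtain ⟨d, rfl⟩ := (FractionalIdeal.mem_one_iff _).mp hy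
      refine (FractionalIdeal.mem_inv_iff hII0).mpr fun z hz => ?_
      have hz1 : z ∈ (1 : FractionalIdeal D⁰ (FractionRing D)) := by
        have : I * I⁻¹ ≤ 1 := by
          rw [FractionalIdeal.inv_eq]; exact FractionalIdeal.mul_one_div_le_one
        exact this hz
      obtain ⟨e, rfl⟩ := (FractionalIdeal.mem_one_iff _).mp hz1
      exact (FractionalIdeal.mem_one_iff _).mpr ⟨d * e, by rw [map_mul]⟩
  rw [hmain, VAux.one_inv]
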